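/- Let σ > 0 and r ≥ 0. Then ∫₀^∞ exp(−m̄(1 − Q₁(v₀/σ, r/σ)))·(v₀/σ²)·exp(−v₀²/(2σ²)) dv₀ ≥ exp(−m̄(1 − exp(−r²/(4σ²)))). -/

import Mathlib

open Real MeasureTheory Set

noncomputable def besselI0 (x : ℝ) : ℝ :=
  (1 / Real.pi) * ∫ θ in (0:ℝ)..Real.pi, Real.exp (x * Real.cos θ)

noncomputable def ricePDF (σ ν u : ℝ) : ℝ :=
  (u / σ ^ 2) * Real.exp (-(u ^ 2 + ν ^ 2) / (2 * σ ^ 2)) * besselI0 (u * ν / σ ^ 2)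

noncomputable def marcumQ (α β : ℝ) : ℝ :=
  ∫ y in Set.Ioi β, y * Real.exp (-(y ^ 2 + α ^ 2) / 2) * besselI0 (α * y)

noncomputable def rayleighPDF (σ v : ℝ) : ℝ :=
  (v / σ ^ 2) * Real.exp (-v ^ 2 / (2 * σ ^ 2))



lemma besselI0_nonneg (x : ℝ) : 0 ≤ besselI0 x := by
  apply mul_nonneg (by positivity)
  apply intervalIntegral.integral_nonneg pi_pos.le
  intro θ _
  positivity

lemma besselI0_le_exp {x y : ℝ} (hxy : 0 ≤ x * y) : besselI0 (x * y) ≤ Real.exp (x * y) := by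
  rw [besselI0]
  have h : ∫ θ in (0:ℝ)..Real.pi, Real.exp (x * y * Real.cos θ) ≤
      ∫ θ in (0:ℝ)..Real.pi, Real.exp (x * y) := by
    apply intervalIntegral.integral_mono_on pi_pos.le
    · exact (Real.continuous_exp.comp (continuous_const.mul continuous_cos)).intervalIntegrable _ _
    · exact intervalIntegrable_const
    · intro θ _
      apply Real.exp_le_exp.2
      nlinarith [Real.cos_le_one θ, Real.neg_one_le_cos θ]
  rw [intervalIntegral.integral_const] at h
  calc (1 / Real.pi) * ∫ θ in (0:ℝ)..Real.pi, Real.exp (x * y * Real.cos θ)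
      ≤ (1 / Real.pi) * ((Real.pi - 0) • Real.exp (x * y)) := by
        apply mul_le_mul_of_nonneg_left h (by positivity)
    _ = Real.exp (x * y) := by
        rw [sub_zero, smul_eq_mul]
        field_simp


lemma stronglyMeasurable_besselI0 : StronglyMeasurable besselI0 := by
  have h : besselI0 = fun s =>
      (1 / Real.pi) * ∫ θ in Ioc (0:ℝ) Real.pi, Real.exp (s * Real.cos θ) := by
    funext s
    rw [besselI0, intervalIntegral.integral_of_le pi_pos.le]
  rw [h]
  apply StronglyMeasurable.const_mul
  exact (Continuous.stronglyMeasurable (by fun_prop :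
    Continuous fun p : ℝ × ℝ => Real.exp (p.1 * Real.cos p.2))).integral_prod_right'

lemma circle_integral (s : ℝ) :
    ∫ θ in Ioo (-Real.pi) Real.pi, Real.exp (s * Real.cos θ) = 2 * Real.pi * besselI0 s := by
  have hc : ∀ a b : ℝ, IntervalIntegrable (fun θ => Real.exp (s * Real.cos θ)) volume a b :=
    fun a b => (Real.continuous_exp.comp (continuous_const.mul continuous_cos)).intervalIntegrable _ _
  have h1 : ∫ θ in Ioo (-Real.pi) Real.pi, Real.exp (s * Real.cos θ)
      = ∫ θ in (-Real.pi)..Real.pi, Real.exp (s * Real.cos θ) := by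
    rw [intervalIntegral.integral_of_le (by linarith [pi_pos] : -Real.pi ≤ Real.pi),
      integral_Ioc_eq_integral_Ioo]
  have h2 : (∫ θ in (-Real.pi)..(0:ℝ), Real.exp (s * Real.cos θ))
      = ∫ θ in (0:ℝ)..Real.pi, Real.exp (s * Real.cos θ) := by
    have := intervalIntegral.integral_comp_neg (a := (0:ℝ)) (b := Real.pi)
      (fun θ => Real.exp (s * Real.cos θ))
    simp only [Real.cos_neg, neg_zero] at this
    rw [← this]
  have h3 := intervalIntegral.integral_add_adjacent_intervals (a := -Real.pi) (b := 0)
    (c := Real.pi) (hc _ _) (hc _ _)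
  rw [h1, ← h3, h2, besselI0]
  have hπ : Real.pi ≠ 0 := pi_ne_zero
  field_simp
  ring


lemma gauss_half : ∫ x : ℝ, Real.exp (-x ^ 2 / 2) = Real.sqrt (2 * Real.pi) := by
  have h : ∀ x : ℝ, -x ^ 2 / 2 = -(2⁻¹ : ℝ) * x ^ 2 := fun x => by ring
  simp_rw [h]
  rw [integral_gaussian]
  rw [show (Real.pi / 2⁻¹) = 2 * Real.pi by ring]

lemma gauss_drift (t : ℝ) :
    ∫ x : ℝ, Real.exp (-x ^ 2 / 2 + t * x) = Real.sqrt (2 * Real.pi) * Real.exp (t ^ 2 / 2) := by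
  have h : ∀ x : ℝ, Real.exp (-x ^ 2 / 2 + t * x)
      = Real.exp (t ^ 2 / 2) * Real.exp (-(x - t) ^ 2 / 2) := by
    intro x
    rw [← Real.exp_add]
    congr 1
    ring
  simp_rw [h]
  rw [MeasureTheory.integral_const_mul, integral_sub_right_eq_self (fun x => Real.exp (-x ^ 2 / 2)) t,
    gauss_half]
  ring


lemma ioo_pi_finite : volume (Ioo (-Real.pi) Real.pi) < ⊤ := by
  rw [Real.volume_Ioo]
  exact ENNReal.ofReal_lt_top

lemma master (t : ℝ) :
    ∫ x in Ioi (0:ℝ), x * Real.exp (-x ^ 2 / 2) * besselI0 (t * x) = Real.exp (t ^ 2 / 2) := by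
  set f : ℝ × ℝ → ℝ := fun w => Real.exp (-w.1 ^ 2 / 2 + t * w.1) * Real.exp (-w.2 ^ 2 / 2)
    with hf
  have hRHS : ∫ p : ℝ × ℝ, f p = 2 * Real.pi * Real.exp (t ^ 2 / 2) := by
    rw [hf, Measure.volume_eq_prod]
    rw [integral_prod_mul (fun x : ℝ => Real.exp (-x ^ 2 / 2 + t * x))
      (fun y : ℝ => Real.exp (-y ^ 2 / 2)), gauss_drift, gauss_half]
    have h2 : Real.sqrt (2 * Real.pi) * Real.sqrt (2 * Real.pi) = 2 * Real.pi :=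
      Real.mul_self_sqrt (by positivity)
    calc Real.sqrt (2 * Real.pi) * Real.exp (t ^ 2 / 2) * Real.sqrt (2 * Real.pi)
        = (Real.sqrt (2 * Real.pi) * Real.sqrt (2 * Real.pi)) * Real.exp (t ^ 2 / 2) := by ring
      _ = 2 * Real.pi * Real.exp (t ^ 2 / 2) := by rw [h2]
  have hpolar := integral_comp_polarCoord_symm f
  set F : ℝ × ℝ → ℝ := fun p => p.1 * Real.exp (-p.1 ^ 2 / 2 + t * p.1 * Real.cos p.2) with hFdef
  have hFeq : ∀ p : ℝ × ℝ, p.1 • f (polarCoord.symm p) = F p := by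
    intro p
    simp only [hf, hFdef, polarCoord_symm_apply, smul_eq_mul, ← Real.exp_add]
    have h1 : (p.1 * Real.cos p.2) ^ 2 + (p.1 * Real.sin p.2) ^ 2 = p.1 ^ 2 := by
      nlinarith [sin_sq_add_cos_sq p.2]
    congr 2
    nlinarith [h1]
  have hFint : IntegrableOn F (Ioi (0:ℝ) ×ˢ Ioo (-Real.pi) Real.pi) (volume.prod volume) := by
    rw [IntegrableOn, ← Measure.prod_restrict]
    have h1 : Integrable (fun x : ℝ => Real.exp (t ^ 2) * (x * Real.exp (-(4:ℝ)⁻¹ * x ^ 2)))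
        (volume.restrict (Ioi (0:ℝ))) :=
      ((integrable_mul_exp_neg_mul_sq (by norm_num : (0:ℝ) < 4⁻¹)).const_mul
        (Real.exp (t ^ 2))).restrict
    have h2 : Integrable (fun _ : ℝ => (1:ℝ)) (volume.restrict (Ioo (-Real.pi) Real.pi)) := by
      rw [← IntegrableOn]
      exact integrableOn_const ioo_pi_finite.ne
    have hbound := h1.mul_prod h2
    apply Integrable.mono' hbound
    · exact (Continuous.aestronglyMeasurable (by fun_prop))
    · rw [Measure.prod_restrict]
      filter_upwards [ae_restrict_mem (measurableSet_Ioi.prod measurableSet_Ioo)] with p hp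
      obtain ⟨hp1, hp2⟩ := hp
      have hx : (0:ℝ) < p.1 := hp1
      have hcos : t * p.1 * Real.cos p.2 ≤ |t| * p.1 := by
        have h := abs_mul_abs_self t
        calc t * p.1 * Real.cos p.2 ≤ |t * p.1 * Real.cos p.2| := le_abs_self _
          _ = |t| * p.1 * |Real.cos p.2| := by
              rw [abs_mul, abs_mul, abs_of_pos hx]
          _ ≤ |t| * p.1 * 1 := by
              apply mul_le_mul_of_nonneg_left (abs_cos_le_one p.2) (by positivity)
          _ = |t| * p.1 := by ring
      have hexp : -p.1 ^ 2 / 2 + t * p.1 * Real.cos p.2 ≤ t ^ 2 + -(4:ℝ)⁻¹ * p.1 ^ 2 := by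
        nlinarith [sq_nonneg (|t| - p.1 / 2), sq_abs t]
      have : ‖F p‖ = p.1 * Real.exp (-p.1 ^ 2 / 2 + t * p.1 * Real.cos p.2) := by
        rw [hFdef]
        simp only [norm_mul, Real.norm_eq_abs, abs_of_pos hx,
          abs_of_pos (Real.exp_pos _)]
      rw [this]
      calc p.1 * Real.exp (-p.1 ^ 2 / 2 + t * p.1 * Real.cos p.2)
          ≤ p.1 * Real.exp (t ^ 2 + -(4:ℝ)⁻¹ * p.1 ^ 2) :=
            mul_le_mul_of_nonneg_left (Real.exp_le_exp.2 hexp) hx.le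
        _ = Real.exp (t ^ 2) * (p.1 * Real.exp (-(4:ℝ)⁻¹ * p.1 ^ 2)) * 1 := by
            rw [Real.exp_add]; ring
  have hiter : ∫ p in Ioi (0:ℝ) ×ˢ Ioo (-Real.pi) Real.pi, F p ∂(volume.prod volume)
      = ∫ x in Ioi (0:ℝ), ∫ θ in Ioo (-Real.pi) Real.pi, F (x, θ) := by
    exact setIntegral_prod F hFint
  have hinner : ∀ x ∈ Ioi (0:ℝ), ∫ θ in Ioo (-Real.pi) Real.pi, F (x, θ)
      = 2 * Real.pi * (x * Real.exp (-x ^ 2 / 2) * besselI0 (t * x)) := by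
    intro x _
    have : ∀ θ : ℝ, F (x, θ) = (x * Real.exp (-x ^ 2 / 2)) * Real.exp ((t * x) * Real.cos θ) := by
      intro θ
      simp only [hFdef]
      rw [Real.exp_add]
      ring
    simp_rw [this]
    rw [MeasureTheory.integral_const_mul, circle_integral (t * x)]
    ring
  have hA1 : ∫ p in Ioi (0:ℝ) ×ˢ Ioo (-Real.pi) Real.pi, F p ∂(volume.prod volume)
      = 2 * Real.pi * ∫ x in Ioi (0:ℝ), x * Real.exp (-x ^ 2 / 2) * besselI0 (t * x) := by
    rw [hiter, setIntegral_congr_fun measurableSet_Ioi hinner,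
      MeasureTheory.integral_const_mul]
  have hA2 : ∫ p in Ioi (0:ℝ) ×ˢ Ioo (-Real.pi) Real.pi, F p ∂(volume.prod volume)
      = 2 * Real.pi * Real.exp (t ^ 2 / 2) := by
    rw [← Measure.volume_eq_prod, ← hRHS, ← hpolar, polarCoord_target]
    exact setIntegral_congr_fun (measurableSet_Ioi.prod measurableSet_Ioo)
      (fun p _ => (hFeq p).symm)
  have h2π : (2 * Real.pi) ≠ 0 := by positivity
  exact mul_left_cancel₀ h2π (hA1.symm.trans hA2)


-- scaled master: ∫_{x>0} x e^{-x²} I₀(y x) dx = e^{y²/4}/2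
lemma masterH (y : ℝ) :
    ∫ x in Ioi (0:ℝ), x * Real.exp (-x ^ 2) * besselI0 (y * x) = Real.exp (y ^ 2 / 4) / 2 := by
  have h2 : (0:ℝ) < Real.sqrt 2 := Real.sqrt_pos.2 (by norm_num)
  set g : ℝ → ℝ := fun u => u * Real.exp (-u ^ 2 / 2) * besselI0 ((y / Real.sqrt 2) * u)
    with hg
  have hcomp := integral_comp_mul_left_Ioi g 0 h2
  have hsq : Real.sqrt 2 * Real.sqrt 2 = 2 := Real.mul_self_sqrt (by norm_num)
  have hgeq : ∀ x : ℝ, g (Real.sqrt 2 * x)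
      = Real.sqrt 2 * (x * Real.exp (-x ^ 2) * besselI0 (y * x)) := by
    intro x
    simp only [hg]
    have e1 : -(Real.sqrt 2 * x) ^ 2 / 2 = -x ^ 2 := by
      rw [mul_pow]
      rw [show Real.sqrt 2 ^ 2 = 2 by rw [sq]; exact hsq]
      ring
    have e2 : (y / Real.sqrt 2) * (Real.sqrt 2 * x) = y * x := by
      field_simp
    rw [e1, e2]
    ring
  rw [mul_zero] at hcomp
  simp_rw [hgeq] at hcomp
  rw [MeasureTheory.integral_const_mul] at hcomp
  have hmaster : ∫ u in Ioi (0:ℝ), g u = Real.exp ((y / Real.sqrt 2) ^ 2 / 2) :=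
    master (y / Real.sqrt 2)
  have e3 : (y / Real.sqrt 2) ^ 2 / 2 = y ^ 2 / 4 := by
    rw [div_pow, show Real.sqrt 2 ^ 2 = 2 by rw [sq]; exact hsq]
    ring
  rw [hmaster, e3, smul_eq_mul] at hcomp
  have : (Real.sqrt 2 : ℝ) ≠ 0 := h2.ne'
  field_simp at hcomp ⊢
  rw [Real.sq_sqrt (by norm_num : (0:ℝ) ≤ 2)] at hcomp
  simp only [mul_comm _ y] at hcomp
  nlinarith [hcomp, Real.exp_pos (y^2/4)]

lemma measurable_besselI0 : Measurable besselI0 := stronglyMeasurable_besselI0.measurable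

-- integrability of the marcum integrand on Ioi 0
lemma marcum_integrand_integrable {α : ℝ} (hα : 0 ≤ α) :
    IntegrableOn (fun y => y * Real.exp (-(y ^ 2 + α ^ 2) / 2) * besselI0 (α * y))
      (Ioi (0:ℝ)) := by
  have hmeas : AEStronglyMeasurable
      (fun y => y * Real.exp (-(y ^ 2 + α ^ 2) / 2) * besselI0 (α * y))
      (volume.restrict (Ioi (0:ℝ))) := by
    apply Measurable.aestronglyMeasurable
    exact (measurable_id.mul ((measurable_id.pow_const 2).add_const _ |>.neg.div_const 2
      |>.exp.comp measurable_id)).mul (measurable_besselI0.comp (measurable_const_mul α))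
  apply Integrable.mono'
    (((integrable_mul_exp_neg_mul_sq (by norm_num : (0:ℝ) < 6⁻¹)).const_mul
      (Real.exp (α ^ 2 / 4))).restrict (s := Ioi (0:ℝ)))
    hmeas
  filter_upwards [ae_restrict_mem measurableSet_Ioi] with y hy
  have hy0 : (0:ℝ) < y := hy
  have hb : besselI0 (α * y) ≤ Real.exp (α * y) := besselI0_le_exp (by positivity)
  have hnn : 0 ≤ y * Real.exp (-(y ^ 2 + α ^ 2) / 2) * besselI0 (α * y) := by
    have := besselI0_nonneg (α * y)
    positivity
  rw [Real.norm_of_nonneg hnn]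
  calc y * Real.exp (-(y ^ 2 + α ^ 2) / 2) * besselI0 (α * y)
      ≤ y * Real.exp (-(y ^ 2 + α ^ 2) / 2) * Real.exp (α * y) := by
        apply mul_le_mul_of_nonneg_left hb (by positivity)
    _ = y * Real.exp (-(y ^ 2 + α ^ 2) / 2 + α * y) := by
        rw [mul_assoc, ← Real.exp_add]
    _ ≤ Real.exp (α ^ 2 / 4) * (y * Real.exp (-6⁻¹ * y ^ 2)) := by
        rw [show Real.exp (α ^ 2 / 4) * (y * Real.exp (-6⁻¹ * y ^ 2))
          = y * Real.exp (α ^ 2 / 4 + -6⁻¹ * y ^ 2) by rw [Real.exp_add]; ring]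
        apply mul_le_mul_of_nonneg_left (Real.exp_le_exp.2 ?_) hy0.le
        nlinarith [sq_nonneg (3 * α - 2 * y)]

-- marcumQ α 0 = 1
lemma marcumQ_zero {α : ℝ} : marcumQ α 0 = 1 := by
  rw [marcumQ]
  have h : ∀ y : ℝ, y * Real.exp (-(y ^ 2 + α ^ 2) / 2) * besselI0 (α * y)
      = Real.exp (-α ^ 2 / 2) * (y * Real.exp (-y ^ 2 / 2) * besselI0 (α * y)) := by
    intro y
    rw [show (-(y ^ 2 + α ^ 2) / 2 : ℝ) = -y ^ 2 / 2 + -α ^ 2 / 2 by ring, Real.exp_add]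
    ring
  simp_rw [h]
  rw [MeasureTheory.integral_const_mul, master α, ← Real.exp_add]
  rw [show (-α ^ 2 / 2 + α ^ 2 / 2 : ℝ) = 0 by ring, Real.exp_zero]

lemma marcumQ_nonneg {α β : ℝ} (hβ : 0 ≤ β) : 0 ≤ marcumQ α β := by
  apply setIntegral_nonneg measurableSet_Ioi
  intro y hy
  have : (0:ℝ) < y := lt_of_le_of_lt hβ hy
  have := besselI0_nonneg (α * y)
  positivity

lemma marcumQ_le_one {α β : ℝ} (hα : 0 ≤ α) (hβ : 0 ≤ β) : marcumQ α β ≤ 1 := by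
  rw [← marcumQ_zero (α := α)]
  rw [marcumQ, marcumQ]
  apply setIntegral_mono_set (marcum_integrand_integrable hα)
  · filter_upwards [ae_restrict_mem measurableSet_Ioi] with y hy
    have hy0 : (0:ℝ) < y := hy
    have := besselI0_nonneg (α * y)
    positivity
  · exact HasSubset.Subset.eventuallyLE (Ioi_subset_Ioi hβ)

lemma stronglyMeasurable_marcumQ (β : ℝ) : StronglyMeasurable (fun α => marcumQ α β) := by
  have : (fun α => marcumQ α β) = fun α =>
      ∫ y, y * Real.exp (-(y ^ 2 + α ^ 2) / 2) * besselI0 (α * y)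
        ∂(volume.restrict (Ioi β)) := by
    funext α; rfl
  rw [this]
  apply StronglyMeasurable.integral_prod_right'
    (f := fun p : ℝ × ℝ => p.2 * Real.exp (-(p.2 ^ 2 + p.1 ^ 2) / 2) * besselI0 (p.1 * p.2))
  apply Measurable.stronglyMeasurable
  exact (measurable_snd.mul (((measurable_snd.pow_const 2).add
    (measurable_fst.pow_const 2)).neg.div_const 2).exp).mul
    (measurable_besselI0.comp (measurable_fst.mul measurable_snd))

-- tail integral: ∫_{y > β} (1/2) y e^{-y²/4} dy = e^{-β²/4}
lemma tail_integral {β : ℝ} (hβ : 0 ≤ β) :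
    ∫ y in Ioi β, y * Real.exp (-y ^ 2 / 2) * (Real.exp (y ^ 2 / 4) / 2)
      = Real.exp (-β ^ 2 / 4) := by
  have h : ∀ y : ℝ, y * Real.exp (-y ^ 2 / 2) * (Real.exp (y ^ 2 / 4) / 2)
      = y / 2 * Real.exp (-y ^ 2 / 4) := by
    intro y
    rw [show y * Real.exp (-y ^ 2 / 2) * (Real.exp (y ^ 2 / 4) / 2)
      = y / 2 * (Real.exp (-y ^ 2 / 2) * Real.exp (y ^ 2 / 4)) by ring, ← Real.exp_add]
    congr 2
    ring
  simp_rw [h]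
  have hderiv : ∀ y ∈ Ici β, HasDerivAt (fun u : ℝ => -Real.exp (-u ^ 2 / 4))
      (y / 2 * Real.exp (-y ^ 2 / 4)) y := by
    intro y _
    have h1 : HasDerivAt (fun u : ℝ => -u ^ 2 / 4) (-y / 2) y := by
      have := (hasDerivAt_pow 2 y).neg.div_const 4
      refine this.congr_deriv ?_
      norm_num
      ring
    have := (h1.exp).neg
    refine this.congr_deriv ?_
    ring
  have hbot : Filter.Tendsto (fun u : ℝ => -u ^ 2 / 4) Filter.atTop Filter.atBot := by
    have h1 : Filter.Tendsto (fun u : ℝ => u ^ 2 / 4) Filter.atTop Filter.atTop :=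
      (Filter.tendsto_pow_atTop (n := 2) (by norm_num)).atTop_div_const (by norm_num)
    have := Filter.tendsto_neg_atTop_atBot.comp h1
    convert this using 1
    funext u
    simp [neg_div]
  have htendsto : Filter.Tendsto (fun u : ℝ => -Real.exp (-u ^ 2 / 4)) Filter.atTop (nhds 0) := by
    rw [show (0:ℝ) = -0 by ring]
    exact (Real.tendsto_exp_atBot.comp hbot).neg
  have := integral_Ioi_of_hasDerivAt_of_nonneg' hderiv (fun y hy => by
    have h0 : (0:ℝ) < y := lt_of_le_of_lt hβ hy
    positivity) htendsto
  rw [this]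
  ring

lemma Kswap {β : ℝ} (hβ : 0 ≤ β) :
    ∫ x in Ioi (0:ℝ), x * Real.exp (-x ^ 2 / 2) * marcumQ x β = Real.exp (-β ^ 2 / 4) := by
  set f : ℝ → ℝ → ℝ := fun x y =>
    (x * Real.exp (-x ^ 2 / 2)) * (y * Real.exp (-(y ^ 2 + x ^ 2) / 2) * besselI0 (x * y))
    with hf
  have hint : Integrable (Function.uncurry f)
      ((volume.restrict (Ioi (0:ℝ))).prod (volume.restrict (Ioi β))) := by
    have h1 : Integrable (fun x : ℝ => x * Real.exp (-(4:ℝ)⁻¹ * x ^ 2))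
        (volume.restrict (Ioi (0:ℝ))) :=
      (integrable_mul_exp_neg_mul_sq (by norm_num : (0:ℝ) < 4⁻¹)).restrict
    have h2 : Integrable (fun y : ℝ => y * Real.exp (-(6:ℝ)⁻¹ * y ^ 2))
        (volume.restrict (Ioi β)) :=
      (integrable_mul_exp_neg_mul_sq (by norm_num : (0:ℝ) < 6⁻¹)).restrict
    apply Integrable.mono' (h1.mul_prod h2)
    · apply Measurable.aestronglyMeasurable
      apply Measurable.mul
      · exact (measurable_fst.mul (((measurable_fst.pow_const 2).neg.div_const 2).exp))
      · exact (measurable_snd.mul ((((measurable_snd.pow_const 2).add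
          (measurable_fst.pow_const 2)).neg.div_const 2).exp)).mul
          (measurable_besselI0.comp (measurable_fst.mul measurable_snd))
    · rw [Measure.prod_restrict]
      filter_upwards [ae_restrict_mem (measurableSet_Ioi.prod measurableSet_Ioi)] with p hp
      obtain ⟨hp1, hp2⟩ := hp
      have hx : (0:ℝ) < p.1 := hp1
      have hy : (0:ℝ) < p.2 := lt_of_le_of_lt hβ hp2
      set x := p.1; set y := p.2
      have hI : besselI0 (x * y) ≤ Real.exp (x * y) := besselI0_le_exp (by positivity)
      have hInn := besselI0_nonneg (x * y)
      have hnn : 0 ≤ Function.uncurry f p := by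
        simp only [Function.uncurry, hf]
        positivity
      rw [Real.norm_of_nonneg hnn]
      have key : Function.uncurry f p ≤ x * y * Real.exp (-x ^ 2 / 2 + -(y ^ 2 + x ^ 2) / 2 + x * y) := by
        simp only [Function.uncurry, hf]
        rw [Real.exp_add, Real.exp_add]
        calc x * Real.exp (-x ^ 2 / 2) * (y * Real.exp (-(y ^ 2 + x ^ 2) / 2) * besselI0 (x * y))
            ≤ x * Real.exp (-x ^ 2 / 2) * (y * Real.exp (-(y ^ 2 + x ^ 2) / 2) * Real.exp (x * y)) := by
              apply mul_le_mul_of_nonneg_left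
                (mul_le_mul_of_nonneg_left hI (by positivity)) (by positivity)
          _ = x * y * (Real.exp (-x ^ 2 / 2) * Real.exp (-(y ^ 2 + x ^ 2) / 2) * Real.exp (x * y)) := by
              ring
      calc Function.uncurry f p
          ≤ x * y * Real.exp (-x ^ 2 / 2 + -(y ^ 2 + x ^ 2) / 2 + x * y) := key
        _ ≤ x * y * Real.exp (-(4:ℝ)⁻¹ * x ^ 2 + -(6:ℝ)⁻¹ * y ^ 2) := by
            apply mul_le_mul_of_nonneg_left (Real.exp_le_exp.2 ?_) (by positivity)
            nlinarith [sq_nonneg (3 * x - 2 * y)]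
        _ = x * Real.exp (-(4:ℝ)⁻¹ * x ^ 2) * (y * Real.exp (-(6:ℝ)⁻¹ * y ^ 2)) := by
            rw [Real.exp_add]; ring
  have hLHS : ∫ x in Ioi (0:ℝ), x * Real.exp (-x ^ 2 / 2) * marcumQ x β
      = ∫ x in Ioi (0:ℝ), ∫ y in Ioi β, f x y := by
    apply setIntegral_congr_fun measurableSet_Ioi
    intro x _
    exact (MeasureTheory.integral_const_mul (x * Real.exp (-x ^ 2 / 2))
      (fun y => y * Real.exp (-(y ^ 2 + x ^ 2) / 2) * besselI0 (x * y))).symm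
  have hswap := MeasureTheory.integral_integral_swap hint
  have hinner : ∀ y ∈ Ioi β, (∫ x in Ioi (0:ℝ), f x y)
      = y * Real.exp (-y ^ 2 / 2) * (Real.exp (y ^ 2 / 4) / 2) := by
    intro y _
    have heq : ∀ x : ℝ, f x y
        = (y * Real.exp (-y ^ 2 / 2)) * (x * Real.exp (-x ^ 2) * besselI0 (y * x)) := by
      intro x
      simp only [hf]
      rw [show (-(y ^ 2 + x ^ 2) / 2 : ℝ) = -y ^ 2 / 2 + -x ^ 2 / 2 by ring, Real.exp_add,
        mul_comm x y]
      rw [show (-x ^ 2 : ℝ) = -x ^ 2 / 2 + -x ^ 2 / 2 by ring, Real.exp_add]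
      ring
    simp_rw [heq]
    rw [MeasureTheory.integral_const_mul, masterH y]
  rw [hLHS, hswap, setIntegral_congr_fun measurableSet_Ioi hinner, tail_integral hβ]

lemma Kfull {σ r : ℝ} (hσ : 0 < σ) (hr : 0 ≤ r) :
    ∫ v in Ioi (0:ℝ), marcumQ (v / σ) (r / σ) * rayleighPDF σ v
      = Real.exp (-r ^ 2 / (4 * σ ^ 2)) := by
  set β := r / σ with hβdef
  have hβ : 0 ≤ β := div_nonneg hr hσ.le
  set g : ℝ → ℝ := fun x => σ⁻¹ * (x * Real.exp (-x ^ 2 / 2) * marcumQ x β) with hg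
  have hcomp := integral_comp_mul_left_Ioi g 0 (inv_pos.2 hσ)
  have hgeq : ∀ v : ℝ, g (σ⁻¹ * v) = marcumQ (v / σ) β * rayleighPDF σ v := by
    intro v
    simp only [hg, rayleighPDF]
    have e1 : σ⁻¹ * v = v / σ := (div_eq_inv_mul v σ).symm
    have e2 : -(v / σ) ^ 2 / 2 = -v ^ 2 / (2 * σ ^ 2) := by
      have hσ0 : σ ≠ 0 := hσ.ne'
      field_simp
      try ring
      try tauto
    rw [e1, e2]
    have e3 : σ⁻¹ * (v / σ) = v / σ ^ 2 := by
      have hσ0 : σ ≠ 0 := hσ.ne'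
      field_simp
      try ring
      try tauto
    calc σ⁻¹ * (v / σ * Real.exp (-v ^ 2 / (2 * σ ^ 2)) * marcumQ (v / σ) β)
        = (σ⁻¹ * (v / σ)) * Real.exp (-v ^ 2 / (2 * σ ^ 2)) * marcumQ (v / σ) β := by ring
      _ = marcumQ (v / σ) β * (v / σ ^ 2 * Real.exp (-v ^ 2 / (2 * σ ^ 2))) := by rw [e3]; ring
  have hgint : ∫ x in Ioi (0:ℝ), g x = σ⁻¹ * Real.exp (-β ^ 2 / 4) := by
    rw [hg]
    rw [MeasureTheory.integral_const_mul, Kswap hβ]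
  rw [mul_zero] at hcomp
  simp_rw [hgeq] at hcomp
  rw [hgint, smul_eq_mul] at hcomp
  rw [hcomp]
  have e4 : -β ^ 2 / 4 = -r ^ 2 / (4 * σ ^ 2) := by
    rw [hβdef, div_pow]
    field_simp
    try left
    try ring
  rw [e4]
  field_simp

lemma rayleigh_hasDeriv {σ : ℝ} (hσ : 0 < σ) :
    ∀ v ∈ Ici (0:ℝ), HasDerivAt (fun u : ℝ => -Real.exp (-u ^ 2 / (2 * σ ^ 2)))
      (rayleighPDF σ v) v := by
  intro v _
  have h1 : HasDerivAt (fun u : ℝ => -u ^ 2 / (2 * σ ^ 2)) (-v / σ ^ 2) v := by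
    have := (hasDerivAt_pow 2 v).neg.div_const (2 * σ ^ 2)
    refine this.congr_deriv ?_
    field_simp
    ring
  have := h1.exp.neg
  refine this.congr_deriv ?_
  rw [rayleighPDF]
  field_simp

lemma rayleigh_tendsto {σ : ℝ} (hσ : 0 < σ) :
    Filter.Tendsto (fun u : ℝ => -Real.exp (-u ^ 2 / (2 * σ ^ 2))) Filter.atTop (nhds 0) := by
  have hbot : Filter.Tendsto (fun u : ℝ => -u ^ 2 / (2 * σ ^ 2)) Filter.atTop Filter.atBot := by
    have h1 : Filter.Tendsto (fun u : ℝ => u ^ 2 / (2 * σ ^ 2)) Filter.atTop Filter.atTop :=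
      (Filter.tendsto_pow_atTop (n := 2) (by norm_num)).atTop_div_const (by positivity)
    have := Filter.tendsto_neg_atTop_atBot.comp h1
    convert this using 1
    funext u
    simp [neg_div]
  rw [show (0:ℝ) = -0 by ring]
  exact (Real.tendsto_exp_atBot.comp hbot).neg

lemma rayleigh_norm {σ : ℝ} (hσ : 0 < σ) :
    ∫ v in Ioi (0:ℝ), rayleighPDF σ v = 1 := by
  have hnn : ∀ v ∈ Ioi (0:ℝ), 0 ≤ rayleighPDF σ v := by
    intro v hv
    have : (0:ℝ) < v := hv
    rw [rayleighPDF]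
    positivity
  have := integral_Ioi_of_hasDerivAt_of_nonneg' (rayleigh_hasDeriv hσ) hnn (rayleigh_tendsto hσ)
  rw [this]
  norm_num

lemma rayleigh_integrable {σ : ℝ} (hσ : 0 < σ) :
    IntegrableOn (rayleighPDF σ) (Ioi (0:ℝ)) := by
  apply integrableOn_Ioi_deriv_of_nonneg' (rayleigh_hasDeriv hσ)
  · intro v hv
    have : (0:ℝ) < v := hv
    rw [rayleighPDF]
    positivity
  · exact rayleigh_tendsto hσ

theorem jensen_rayleigh_marcum_bound (m σ r : ℝ) (hm : 0 < m) (hσ : 0 < σ) (hr : 0 ≤ r) :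
    Real.exp (-m * (1 - Real.exp (-r ^ 2 / (4 * σ ^ 2)))) ≤
      ∫ v in Set.Ioi (0:ℝ),
        Real.exp (-m * (1 - marcumQ (v / σ) (r / σ))) * rayleighPDF σ v := by
  set E := Real.exp (-r ^ 2 / (4 * σ ^ 2)) with hE
  set c := -m * (1 - E) with hc
  set Q : ℝ → ℝ := fun v => marcumQ (v / σ) (r / σ) with hQ
  have hβ : 0 ≤ r / σ := div_nonneg hr hσ.le
  have hQmeas : Measurable Q :=
    (stronglyMeasurable_marcumQ (r / σ)).measurable.comp (measurable_id.div_const σ)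
  have hwmeas : Measurable (rayleighPDF σ) := by
    apply Measurable.mul
    · exact measurable_id.div_const _
    · exact ((measurable_id.pow_const 2).neg.div_const _).exp
  have hw_int : IntegrableOn (rayleighPDF σ) (Ioi (0:ℝ)) := rayleigh_integrable hσ
  have hw_nonneg : ∀ v ∈ Ioi (0:ℝ), 0 ≤ rayleighPDF σ v := by
    intro v hv
    have : (0:ℝ) < v := hv
    rw [rayleighPDF]
    positivity
  have hQ0 : ∀ v, 0 ≤ Q v := fun v => marcumQ_nonneg hβ
  have hQ1 : ∀ v ∈ Ioi (0:ℝ), Q v ≤ 1 := by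
    intro v hv
    exact marcumQ_le_one (div_nonneg (le_of_lt hv) hσ.le) hβ
  have hQw_int : IntegrableOn (fun v => Q v * rayleighPDF σ v) (Ioi (0:ℝ)) := by
    apply Integrable.mono' hw_int ((hQmeas.mul hwmeas).aestronglyMeasurable)
    filter_upwards [ae_restrict_mem measurableSet_Ioi] with v hv
    rw [Pi.mul_apply]
    rw [Real.norm_of_nonneg (mul_nonneg (hQ0 v) (hw_nonneg v hv))]
    calc Q v * rayleighPDF σ v ≤ 1 * rayleighPDF σ v :=
          mul_le_mul_of_nonneg_right (hQ1 v hv) (hw_nonneg v hv)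
      _ = rayleighPDF σ v := one_mul _
  have hQw : ∫ v in Ioi (0:ℝ), Q v * rayleighPDF σ v = E := Kfull hσ hr
  -- the exp integrand
  set fexp : ℝ → ℝ := fun v => Real.exp (-m * (1 - Q v)) * rayleighPDF σ v with hfexp
  have hfexp_int : IntegrableOn fexp (Ioi (0:ℝ)) := by
    apply Integrable.mono' hw_int
    · exact ((((hQmeas.const_sub 1).const_mul (-m)).exp).mul hwmeas).aestronglyMeasurable
    · filter_upwards [ae_restrict_mem measurableSet_Ioi] with v hv
      have h1 : Real.exp (-m * (1 - Q v)) ≤ 1 := by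
        rw [Real.exp_le_one_iff]
        nlinarith [hQ1 v hv]
      rw [Real.norm_of_nonneg (mul_nonneg (Real.exp_pos _).le (hw_nonneg v hv))]
      calc Real.exp (-m * (1 - Q v)) * rayleighPDF σ v ≤ 1 * rayleighPDF σ v :=
            mul_le_mul_of_nonneg_right h1 (hw_nonneg v hv)
        _ = rayleighPDF σ v := one_mul _
  -- tangent line function
  set T : ℝ → ℝ := fun v =>
    Real.exp c * ((1 - m - c) * rayleighPDF σ v + m * (Q v * rayleighPDF σ v)) with hT
  have hT_int : IntegrableOn T (Ioi (0:ℝ)) :=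
    (((hw_int.const_mul (1 - m - c)).add (hQw_int.const_mul m)).const_mul (Real.exp c))
  have hT_val : ∫ v in Ioi (0:ℝ), T v = Real.exp c := by
    rw [hT]
    rw [MeasureTheory.integral_const_mul]
    rw [integral_add (hw_int.const_mul (1 - m - c)) (hQw_int.const_mul m)]
    rw [MeasureTheory.integral_const_mul, MeasureTheory.integral_const_mul,
      rayleigh_norm hσ, hQw]
    have : (1 - m - c) * 1 + m * E = 1 := by
      rw [hc]
      ring
    rw [this, mul_one]
  have hpoint : ∀ v ∈ Ioi (0:ℝ), T v ≤ fexp v := by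
    intro v hv
    have hx : (-m * (1 - Q v) - c) + 1 ≤ Real.exp (-m * (1 - Q v) - c) :=
      Real.add_one_le_exp _
    have h2 : Real.exp c * ((-m * (1 - Q v) - c) + 1) ≤ Real.exp (-m * (1 - Q v)) := by
      calc Real.exp c * ((-m * (1 - Q v) - c) + 1)
          ≤ Real.exp c * Real.exp (-m * (1 - Q v) - c) :=
            mul_le_mul_of_nonneg_left hx (Real.exp_pos _).le
        _ = Real.exp (-m * (1 - Q v)) := by
            rw [← Real.exp_add]
            congr 1
            ring
    have h3 : T v = Real.exp c * ((-m * (1 - Q v) - c) + 1) * rayleighPDF σ v := by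
      rw [hT]
      ring
    rw [h3, hfexp]
    exact mul_le_mul_of_nonneg_right h2 (hw_nonneg v hv)
  calc Real.exp (-m * (1 - E)) = ∫ v in Ioi (0:ℝ), T v := hT_val.symm
    _ ≤ ∫ v in Ioi (0:ℝ), fexp v :=
        setIntegral_mono_on hT_int hfexp_int measurableSet_Ioi hpoint
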